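/- Fix integers k ≥ 1, j ≥ 0 and s ≥ 0 with 2s ≤ k−1. Let A be the set of n = 3(k+2j+1)+1 distinct lines of the real projective plane consisting of: the line z = 0, and the lines x = c·z, y = c·z, and x + y = c·z for each integer −j ≤ c ≤ k+j (the arrangement A_{A2}^{[−j,k+j]}). Let L be any one of the three lines x = −(j+s+1)·z, y = −(j+s+1)·z, x + y = (k+j+s+1)·z, none of which belongs to A. Then the set of intersection points {L ∩ K : K ∈ A} has exactly k+3j+3+s elements. (Equivalently, t_{A ∪ {L}, L} = 2k+3j+1−s; by the splitting-type criterion this gives T_A|_L ≅ O_L(−2k−3j−1+s) ⊕ O_L(−k−3j−2−s).) -/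
import Mathlib


noncomputable section

/-- The projective line `{a·x + b·y + c·z = 0}` regarded as the 2-dimensional subspace
of `ℝ³` cut out by the linear form with coefficients `a, b, c`. -/
def lineL (a b c : ℝ) : Submodule ℝ (Fin 3 → ℝ) :=
  LinearMap.ker
    ((a • LinearMap.proj 0 + b • LinearMap.proj 1 + c • LinearMap.proj 2 :
      (Fin 3 → ℝ) →ₗ[ℝ] ℝ))

/-- The grid arrangement: the line at infinity `z = 0` together with the lines
`x = s·z` and `y = s·z` for integers `-j ≤ s ≤ k+j`. -/
def gridLines (k j : ℕ) : Set (Submodule ℝ (Fin 3 → ℝ)) :=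
  {lineL 0 0 1} ∪
    {L | ∃ s : ℤ, -(j : ℤ) ≤ s ∧ s ≤ (k : ℤ) + j ∧
      (L = lineL 1 0 (-(s : ℝ)) ∨ L = lineL 0 1 (-(s : ℝ)))}

/-- The full deformed `A2` arrangement `A_{A2}^{[-j, k+j]}`. -/
def arrA2 (k j : ℕ) : Set (Submodule ℝ (Fin 3 → ℝ)) :=
  gridLines k j ∪
    {L | ∃ c : ℤ, -(j : ℤ) ≤ c ∧ c ≤ (k : ℤ) + j ∧ L = lineL 1 1 (-(c : ℝ))}

lemma mem_lineL {a b c : ℝ} {v : Fin 3 → ℝ} :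
    v ∈ lineL a b c ↔ a * v 0 + b * v 1 + c * v 2 = 0 := by
  simp [lineL, LinearMap.mem_ker, LinearMap.add_apply, LinearMap.smul_apply,
    LinearMap.proj_apply, smul_eq_mul]

lemma inf_AB (a b : ℝ) :
    lineL 1 0 a ⊓ lineL 0 1 b = Submodule.span ℝ {![-a, -b, 1]} := by
  ext v
  simp only [Submodule.mem_inf, mem_lineL, Submodule.mem_span_singleton]
  constructor
  · rintro ⟨h1, h2⟩
    refine ⟨v 2, ?_⟩
    funext i
    fin_cases i <;> simp <;> ring_nf <;> linarith
  · rintro ⟨t, rfl⟩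
    constructor <;> simp <;> ring

lemma inf_AC (a b : ℝ) :
    lineL 1 0 a ⊓ lineL 1 1 b = Submodule.span ℝ {![-a, a - b, 1]} := by
  ext v
  simp only [Submodule.mem_inf, mem_lineL, Submodule.mem_span_singleton]
  constructor
  · rintro ⟨h1, h2⟩
    refine ⟨v 2, ?_⟩
    funext i; fin_cases i <;> simp <;> ring_nf <;> linarith
  · rintro ⟨t, rfl⟩
    constructor <;> simp <;> ring

lemma inf_BC (a b : ℝ) :
    lineL 0 1 a ⊓ lineL 1 1 b = Submodule.span ℝ {![a - b, -a, 1]} := by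
  ext v
  simp only [Submodule.mem_inf, mem_lineL, Submodule.mem_span_singleton]
  constructor
  · rintro ⟨h1, h2⟩
    refine ⟨v 2, ?_⟩
    funext i; fin_cases i <;> simp <;> ring_nf <;> linarith
  · rintro ⟨t, rfl⟩
    constructor <;> simp <;> ring

lemma inf_AA (a b : ℝ) (h : a ≠ b) :
    lineL 1 0 a ⊓ lineL 1 0 b = Submodule.span ℝ {![0, 1, 0]} := by
  ext v
  simp only [Submodule.mem_inf, mem_lineL, Submodule.mem_span_singleton]
  constructor
  · rintro ⟨h1, h2⟩
    have hz : v 2 = 0 := by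
      rcases mul_eq_zero.mp (show (a - b) * v 2 = 0 by linarith) with h' | h'
      · exact absurd (sub_eq_zero.mp h') h
      · exact h'
    have hx : v 0 = 0 := by
      have h1' : v 0 + a * v 2 = 0 := by linarith
      rw [hz] at h1'; simpa using h1'
    exact ⟨v 1, by funext i; fin_cases i <;> simp [hx, hz]⟩
  · rintro ⟨t, rfl⟩
    constructor <;> simp

lemma inf_BB (a b : ℝ) (h : a ≠ b) :
    lineL 0 1 a ⊓ lineL 0 1 b = Submodule.span ℝ {![1, 0, 0]} := by
  ext v
  simp only [Submodule.mem_inf, mem_lineL, Submodule.mem_span_singleton]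
  constructor
  · rintro ⟨h1, h2⟩
    have hz : v 2 = 0 := by
      rcases mul_eq_zero.mp (show (a - b) * v 2 = 0 by linarith) with h' | h'
      · exact absurd (sub_eq_zero.mp h') h
      · exact h'
    have hy : v 1 = 0 := by
      have h1' : v 1 + a * v 2 = 0 := by linarith
      rw [hz] at h1'; simpa using h1'
    exact ⟨v 0, by funext i; fin_cases i <;> simp [hy, hz]⟩
  · rintro ⟨t, rfl⟩
    constructor <;> simp

lemma inf_CC (a b : ℝ) (h : a ≠ b) :
    lineL 1 1 a ⊓ lineL 1 1 b = Submodule.span ℝ {![1, -1, 0]} := by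
  ext v
  simp only [Submodule.mem_inf, mem_lineL, Submodule.mem_span_singleton]
  constructor
  · rintro ⟨h1, h2⟩
    have hz : v 2 = 0 := by
      rcases mul_eq_zero.mp (show (a - b) * v 2 = 0 by linarith) with h' | h'
      · exact absurd (sub_eq_zero.mp h') h
      · exact h'
    have hy : v 1 = -(v 0) := by
      have h1' : v 0 + v 1 + a * v 2 = 0 := by linarith
      rw [hz] at h1'; ring_nf at h1' ⊢; linarith
    exact ⟨v 0, by funext i; fin_cases i <;> simp [hy, hz]⟩
  · rintro ⟨t, rfl⟩
    constructor <;> simp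

lemma inf_Ainf (a : ℝ) :
    lineL 1 0 a ⊓ lineL 0 0 1 = Submodule.span ℝ {![0, 1, 0]} := by
  ext v
  simp only [Submodule.mem_inf, mem_lineL, Submodule.mem_span_singleton]
  constructor
  · rintro ⟨h1, h2⟩
    have hz : v 2 = 0 := by linarith
    have hx : v 0 = 0 := by
      have h1' : v 0 + a * v 2 = 0 := by linarith
      rw [hz] at h1'; simpa using h1'
    exact ⟨v 1, by funext i; fin_cases i <;> simp [hx, hz]⟩
  · rintro ⟨t, rfl⟩
    constructor <;> simp

lemma inf_Binf (a : ℝ) :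
    lineL 0 1 a ⊓ lineL 0 0 1 = Submodule.span ℝ {![1, 0, 0]} := by
  ext v
  simp only [Submodule.mem_inf, mem_lineL, Submodule.mem_span_singleton]
  constructor
  · rintro ⟨h1, h2⟩
    have hz : v 2 = 0 := by linarith
    have hy : v 1 = 0 := by
      have h1' : v 1 + a * v 2 = 0 := by linarith
      rw [hz] at h1'; simpa using h1'
    exact ⟨v 0, by funext i; fin_cases i <;> simp [hy, hz]⟩
  · rintro ⟨t, rfl⟩
    constructor <;> simp

lemma inf_Cinf (a : ℝ) :
    lineL 1 1 a ⊓ lineL 0 0 1 = Submodule.span ℝ {![1, -1, 0]} := by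
  ext v
  simp only [Submodule.mem_inf, mem_lineL, Submodule.mem_span_singleton]
  constructor
  · rintro ⟨h1, h2⟩
    have hz : v 2 = 0 := by linarith
    have hy : v 1 = -(v 0) := by
      have h1' : v 0 + v 1 + a * v 2 = 0 := by linarith
      rw [hz] at h1'; ring_nf at h1' ⊢; linarith
    exact ⟨v 0, by funext i; fin_cases i <;> simp [hy, hz]⟩
  · rintro ⟨t, rfl⟩
    constructor <;> simp

lemma span1_inj {a b c d : ℝ}
    (h : Submodule.span ℝ {![a, b, 1]} = Submodule.span ℝ {![c, d, (1:ℝ)]}) :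
    a = c ∧ b = d := by
  have hm : ![a, b, (1:ℝ)] ∈ Submodule.span ℝ {![c, d, (1:ℝ)]} := by
    rw [← h]; exact Submodule.mem_span_singleton_self _
  rw [Submodule.mem_span_singleton] at hm
  obtain ⟨t, ht⟩ := hm
  have h2 := congrFun ht 2
  have h0 := congrFun ht 0
  have h1 := congrFun ht 1
  simp at h2 h0 h1
  subst h2; simp at h0 h1; exact ⟨h0.symm, h1.symm⟩

lemma span0_ne (x y a b : ℝ) :
    Submodule.span ℝ {![x, y, (0:ℝ)]} ≠ Submodule.span ℝ {![a, b, (1:ℝ)]} := by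
  intro h
  have hm : ![a, b, (1:ℝ)] ∈ Submodule.span ℝ {![x, y, (0:ℝ)]} := by
    rw [h]; exact Submodule.mem_span_singleton_self _
  rw [Submodule.mem_span_singleton] at hm
  obtain ⟨t, ht⟩ := hm
  have h2 := congrFun ht 2
  simp at h2

lemma lineA_inj {a b : ℝ} (h : lineL 1 0 a = lineL 1 0 b) : a = b := by
  have hm : ![-a, 0, (1:ℝ)] ∈ lineL 1 0 b := by
    rw [← h, mem_lineL]; simp
  rw [mem_lineL] at hm; simp at hm; linarith

lemma lineB_inj {a b : ℝ} (h : lineL 0 1 a = lineL 0 1 b) : a = b := by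
  have hm : ![0, -a, (1:ℝ)] ∈ lineL 0 1 b := by
    rw [← h, mem_lineL]; simp
  rw [mem_lineL] at hm; simp at hm; linarith

lemma lineC_inj {a b : ℝ} (h : lineL 1 1 a = lineL 1 1 b) : a = b := by
  have hm : ![-a, 0, (1:ℝ)] ∈ lineL 1 1 b := by
    rw [← h, mem_lineL]; simp
  rw [mem_lineL] at hm; simp at hm; linarith

lemma lineA_ne_B (a b : ℝ) : lineL 1 0 a ≠ lineL 0 1 b := by
  intro h
  have hm : ![0, 1, (0:ℝ)] ∈ lineL 0 1 b := by rw [← h, mem_lineL]; simp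
  rw [mem_lineL] at hm; simp at hm

lemma lineA_ne_C (a b : ℝ) : lineL 1 0 a ≠ lineL 1 1 b := by
  intro h
  have hm : ![0, 1, (0:ℝ)] ∈ lineL 1 1 b := by rw [← h, mem_lineL]; simp
  rw [mem_lineL] at hm; simp at hm

lemma lineB_ne_C (a b : ℝ) : lineL 0 1 a ≠ lineL 1 1 b := by
  intro h
  have hm : ![1, 0, (0:ℝ)] ∈ lineL 1 1 b := by rw [← h, mem_lineL]; simp
  rw [mem_lineL] at hm; simp at hm

lemma lineInf_ne_A (a : ℝ) : lineL 0 0 1 ≠ lineL 1 0 a := by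
  intro h
  have hm : ![-a, 0, (1:ℝ)] ∈ lineL 0 0 1 := by rw [h, mem_lineL]; simp
  rw [mem_lineL] at hm; simp at hm

lemma lineInf_ne_B (a : ℝ) : lineL 0 0 1 ≠ lineL 0 1 a := by
  intro h
  have hm : ![0, -a, (1:ℝ)] ∈ lineL 0 0 1 := by rw [h, mem_lineL]; simp
  rw [mem_lineL] at hm; simp at hm

lemma lineInf_ne_C (a : ℝ) : lineL 0 0 1 ≠ lineL 1 1 a := by
  intro h
  have hm : ![-a, 0, (1:ℝ)] ∈ lineL 0 0 1 := by rw [h, mem_lineL]; simp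
  rw [mem_lineL] at hm; simp at hm

lemma mem_arrA2 {k j : ℕ} {K : Submodule ℝ (Fin 3 → ℝ)} :
    K ∈ arrA2 k j ↔ K = lineL 0 0 1 ∨
      ∃ c : ℤ, -(j : ℤ) ≤ c ∧ c ≤ (k : ℤ) + j ∧
        (K = lineL 1 0 (-(c : ℝ)) ∨ K = lineL 0 1 (-(c : ℝ)) ∨ K = lineL 1 1 (-(c : ℝ))) := by
  simp only [arrA2, gridLines, Set.mem_union, Set.mem_singleton_iff, Set.mem_setOf_eq]
  constructor
  · rintro ((h | ⟨c, h1, h2, h3 | h3⟩) | ⟨c, h1, h2, h3⟩)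
    · exact Or.inl h
    · exact Or.inr ⟨c, h1, h2, Or.inl h3⟩
    · exact Or.inr ⟨c, h1, h2, Or.inr (Or.inl h3)⟩
    · exact Or.inr ⟨c, h1, h2, Or.inr (Or.inr h3)⟩
  · rintro (h | ⟨c, h1, h2, h3 | h3 | h3⟩)
    · exact Or.inl (Or.inl h)
    · exact Or.inl (Or.inr ⟨c, h1, h2, Or.inl h3⟩)
    · exact Or.inl (Or.inr ⟨c, h1, h2, Or.inr h3⟩)
    · exact Or.inr ⟨c, h1, h2, h3⟩

lemma count_main (P : Submodule ℝ (Fin 3 → ℝ)) (g : ℤ → Submodule ℝ (Fin 3 → ℝ))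
    (hg : Function.Injective g) (hP : ∀ m, P ≠ g m) (a b : ℤ) :
    ({P} ∪ g '' ↑(Finset.Icc a b) : Set (Submodule ℝ (Fin 3 → ℝ))).ncard
      = 1 + (b + 1 - a).toNat := by
  classical
  rw [show (g '' ↑(Finset.Icc a b) : Set (Submodule ℝ (Fin 3 → ℝ)))
      = ↑((Finset.Icc a b).image g) by simp,
    Set.singleton_union, ← Finset.coe_insert, Set.ncard_coe_finset,
    Finset.card_insert_of_notMem ?_,
    Finset.card_image_of_injective _ hg, Int.card_Icc]
  · omega
  · simp only [Finset.mem_image]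
    rintro ⟨m, _, hm⟩
    exact hP m hm.symm

lemma arrA2_card (k j : ℕ) : (arrA2 k j).ncard = 3 * (k + 2 * j + 1) + 1 := by
  classical
  have hset : arrA2 k j = ↑(insert (lineL 0 0 1)
      (((Finset.Icc (-(j:ℤ)) (k + j)).image fun c : ℤ => lineL 1 0 (-(c:ℝ))) ∪
       ((Finset.Icc (-(j:ℤ)) (k + j)).image fun c : ℤ => lineL 0 1 (-(c:ℝ))) ∪
       ((Finset.Icc (-(j:ℤ)) (k + j)).image fun c : ℤ => lineL 1 1 (-(c:ℝ))))) := by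
    ext K
    rw [mem_arrA2]
    simp only [Finset.coe_insert, Set.mem_insert_iff, Finset.coe_union, Set.mem_union,
      Finset.mem_coe, Finset.mem_image, Finset.mem_Icc]
    constructor
    · rintro (h | ⟨c, h1, h2, h3 | h3 | h3⟩)
      · exact Or.inl h
      · exact Or.inr (Or.inl (Or.inl ⟨c, ⟨h1, h2⟩, h3.symm⟩))
      · exact Or.inr (Or.inl (Or.inr ⟨c, ⟨h1, h2⟩, h3.symm⟩))
      · exact Or.inr (Or.inr ⟨c, ⟨h1, h2⟩, h3.symm⟩)
    · rintro (h | ((⟨c, ⟨h1, h2⟩, h3⟩ | ⟨c, ⟨h1, h2⟩, h3⟩) | ⟨c, ⟨h1, h2⟩, h3⟩))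
      · exact Or.inl h
      · exact Or.inr ⟨c, h1, h2, Or.inl h3.symm⟩
      · exact Or.inr ⟨c, h1, h2, Or.inr (Or.inl h3.symm)⟩
      · exact Or.inr ⟨c, h1, h2, Or.inr (Or.inr h3.symm)⟩
  rw [hset, Set.ncard_coe_finset]
  have hiA : Function.Injective fun c : ℤ => lineL 1 0 (-(c:ℝ)) := by
    intro x y h; have := lineA_inj h; exact_mod_cast neg_injective this
  have hiB : Function.Injective fun c : ℤ => lineL 0 1 (-(c:ℝ)) := by
    intro x y h; have := lineB_inj h; exact_mod_cast neg_injective this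
  have hiC : Function.Injective fun c : ℤ => lineL 1 1 (-(c:ℝ)) := by
    intro x y h; have := lineC_inj h; exact_mod_cast neg_injective this
  rw [Finset.card_insert_of_notMem (by
      simp only [Finset.mem_union, Finset.mem_image]
      rintro ((⟨c, _, h⟩ | ⟨c, _, h⟩) | ⟨c, _, h⟩)
      · exact lineInf_ne_A _ h.symm
      · exact lineInf_ne_B _ h.symm
      · exact lineInf_ne_C _ h.symm),
    Finset.card_union_of_disjoint (by
      rw [Finset.disjoint_left]
      simp only [Finset.mem_union, Finset.mem_image]
      rintro x ((⟨c, _, rfl⟩ | ⟨c, _, rfl⟩)) ⟨d, _, h⟩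
      · exact lineA_ne_C (-(c:ℝ)) (-(d:ℝ)) h.symm
      · exact lineB_ne_C (-(c:ℝ)) (-(d:ℝ)) h.symm),
    Finset.card_union_of_disjoint (by
      rw [Finset.disjoint_left]
      simp only [Finset.mem_image]
      rintro x ⟨c, _, rfl⟩ ⟨d, _, h⟩
      exact lineA_ne_B (-(c:ℝ)) (-(d:ℝ)) h.symm),
    Finset.card_image_of_injective _ hiA, Finset.card_image_of_injective _ hiB,
    Finset.card_image_of_injective _ hiC, Int.card_Icc]
  omega

lemma inf_BA (a b : ℝ) : lineL 0 1 a ⊓ lineL 1 0 b = Submodule.span ℝ {![-b, -a, 1]} := by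
  rw [inf_comm]; exact inf_AB b a
lemma inf_CA (a b : ℝ) : lineL 1 1 a ⊓ lineL 1 0 b = Submodule.span ℝ {![-b, b - a, 1]} := by
  rw [inf_comm]; exact inf_AC b a
lemma inf_CB (a b : ℝ) : lineL 1 1 a ⊓ lineL 0 1 b = Submodule.span ℝ {![b - a, -b, 1]} := by
  rw [inf_comm]; exact inf_BC b a

lemma imageA (k j s : ℕ) (hs' : s < k) :
    (fun K => lineL 1 0 ((j:ℝ) + s + 1) ⊓ K) '' arrA2 k j
      = {Submodule.span ℝ {![0, 1, 0]}} ∪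
        (fun m : ℤ => Submodule.span ℝ {![-((j:ℝ) + s + 1), (m:ℝ), 1]}) ''
          ↑(Finset.Icc (-(j:ℤ)) (k + 2*j + s + 1)) := by
  ext P
  simp only [Set.mem_image, Set.mem_union, Set.mem_singleton_iff, Finset.mem_coe,
    Finset.mem_Icc]
  constructor
  · rintro ⟨K, hK, rfl⟩
    rcases mem_arrA2.mp hK with rfl | ⟨c, h1, h2, rfl | rfl | rfl⟩
    · exact Or.inl (inf_Ainf _)
    · refine Or.inl (inf_AA _ _ ?_)
      have h1' : -(j:ℝ) ≤ (c:ℝ) := by exact_mod_cast h1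
      have hs0 : (0:ℝ) ≤ (s:ℕ) := Nat.cast_nonneg s
      intro he
      linarith
    · refine Or.inr ⟨c, ⟨h1, by omega⟩, ?_⟩
      have hv : ![-((j:ℝ) + s + 1), (c:ℝ), 1] = ![-((j:ℝ) + s + 1), -(-(c:ℝ)), 1] := by
        norm_num
      simp only [hv]
      exact (inf_AB _ _).symm
    · refine Or.inr ⟨c + ((j:ℤ) + s + 1), ⟨by omega, by omega⟩, ?_⟩
      have hv : ![-((j:ℝ) + s + 1), ((c + ((j:ℤ) + s + 1) : ℤ) : ℝ), 1]
          = ![-((j:ℝ) + s + 1), ((j:ℝ) + s + 1) - -(c:ℝ), 1] := by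
        funext i; fin_cases i <;> simp <;> push_cast <;> ring
      simp only [hv]
      exact (inf_AC _ _).symm
  · rintro (rfl | ⟨m, ⟨hm1, hm2⟩, rfl⟩)
    · exact ⟨lineL 0 0 1, mem_arrA2.mpr (Or.inl rfl), inf_Ainf _⟩
    · by_cases hmk : m ≤ (k:ℤ) + j
      · refine ⟨lineL 0 1 (-(m:ℝ)),
          mem_arrA2.mpr (Or.inr ⟨m, hm1, hmk, Or.inr (Or.inl rfl)⟩), ?_⟩
        rw [inf_AB]
        norm_num
      · refine ⟨lineL 1 1 (-((m - ((j:ℤ) + s + 1) : ℤ) : ℝ)),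
          mem_arrA2.mpr (Or.inr ⟨m - ((j:ℤ) + s + 1), by omega, by omega,
            Or.inr (Or.inr rfl)⟩), ?_⟩
        rw [inf_AC]
        have hv : ![-((j:ℝ) + s + 1),
            ((j:ℝ) + s + 1) - -((m - ((j:ℤ) + s + 1) : ℤ) : ℝ), 1]
            = ![-((j:ℝ) + s + 1), (m:ℝ), 1] := by
          funext i; fin_cases i <;> simp <;> push_cast <;> ring
        rw [hv]

lemma imageB (k j s : ℕ) (hs' : s < k) :
    (fun K => lineL 0 1 ((j:ℝ) + s + 1) ⊓ K) '' arrA2 k j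
      = {Submodule.span ℝ {![1, 0, 0]}} ∪
        (fun m : ℤ => Submodule.span ℝ {![(m:ℝ), -((j:ℝ) + s + 1), 1]}) ''
          ↑(Finset.Icc (-(j:ℤ)) (k + 2*j + s + 1)) := by
  ext P
  simp only [Set.mem_image, Set.mem_union, Set.mem_singleton_iff, Finset.mem_coe,
    Finset.mem_Icc]
  constructor
  · rintro ⟨K, hK, rfl⟩
    rcases mem_arrA2.mp hK with rfl | ⟨c, h1, h2, rfl | rfl | rfl⟩
    · exact Or.inl (inf_Binf _)
    · refine Or.inr ⟨c, ⟨h1, by omega⟩, ?_⟩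
      have hv : ![(c:ℝ), -((j:ℝ) + s + 1), 1] = ![-(-(c:ℝ)), -((j:ℝ) + s + 1), 1] := by
        norm_num
      simp only [hv]
      exact (inf_BA _ _).symm
    · refine Or.inl (inf_BB _ _ ?_)
      have h1' : -(j:ℝ) ≤ (c:ℝ) := by exact_mod_cast h1
      have hs0 : (0:ℝ) ≤ (s:ℕ) := Nat.cast_nonneg s
      intro he
      linarith
    · refine Or.inr ⟨c + ((j:ℤ) + s + 1), ⟨by omega, by omega⟩, ?_⟩
      have hv : ![((c + ((j:ℤ) + s + 1) : ℤ) : ℝ), -((j:ℝ) + s + 1), 1]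
          = ![((j:ℝ) + s + 1) - -(c:ℝ), -((j:ℝ) + s + 1), 1] := by
        funext i; fin_cases i <;> simp <;> push_cast <;> ring
      simp only [hv]
      exact (inf_BC _ _).symm
  · rintro (rfl | ⟨m, ⟨hm1, hm2⟩, rfl⟩)
    · exact ⟨lineL 0 0 1, mem_arrA2.mpr (Or.inl rfl), inf_Binf _⟩
    · by_cases hmk : m ≤ (k:ℤ) + j
      · refine ⟨lineL 1 0 (-(m:ℝ)),
          mem_arrA2.mpr (Or.inr ⟨m, hm1, hmk, Or.inl rfl⟩), ?_⟩
        rw [inf_BA]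
        norm_num
      · refine ⟨lineL 1 1 (-((m - ((j:ℤ) + s + 1) : ℤ) : ℝ)),
          mem_arrA2.mpr (Or.inr ⟨m - ((j:ℤ) + s + 1), by omega, by omega,
            Or.inr (Or.inr rfl)⟩), ?_⟩
        rw [inf_BC]
        have hv : ![((j:ℝ) + s + 1) - -((m - ((j:ℤ) + s + 1) : ℤ) : ℝ),
            -((j:ℝ) + s + 1), 1]
            = ![(m:ℝ), -((j:ℝ) + s + 1), 1] := by
          funext i; fin_cases i <;> simp <;> push_cast <;> ring
        rw [hv]

lemma imageC (k j s : ℕ) (hs' : s < k) :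
    (fun K => lineL 1 1 (-((k:ℝ) + j + s + 1)) ⊓ K) '' arrA2 k j
      = {Submodule.span ℝ {![1, -1, 0]}} ∪
        (fun m : ℤ => Submodule.span ℝ {![(m:ℝ), ((k:ℝ) + j + s + 1) - m, 1]}) ''
          ↑(Finset.Icc (-(j:ℤ)) (k + 2*j + s + 1)) := by
  ext P
  simp only [Set.mem_image, Set.mem_union, Set.mem_singleton_iff, Finset.mem_coe,
    Finset.mem_Icc]
  constructor
  · rintro ⟨K, hK, rfl⟩
    rcases mem_arrA2.mp hK with rfl | ⟨c, h1, h2, rfl | rfl | rfl⟩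
    · exact Or.inl (inf_Cinf _)
    · refine Or.inr ⟨c, ⟨h1, by omega⟩, ?_⟩
      have hv : ![(c:ℝ), ((k:ℝ) + j + s + 1) - c, 1]
          = ![-(-(c:ℝ)), -(c:ℝ) - -((k:ℝ) + j + s + 1), 1] := by
        funext i; fin_cases i <;> simp <;> push_cast <;> ring
      simp only [hv]
      exact (inf_CA _ _).symm
    · refine Or.inr ⟨((k:ℤ) + j + s + 1) - c, ⟨by omega, by omega⟩, ?_⟩
      have hv : ![(((((k:ℤ) + j + s + 1) - c : ℤ)) : ℝ),
          ((k:ℝ) + j + s + 1) - ((((k:ℤ) + j + s + 1) - c : ℤ) : ℝ), 1]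
          = ![-(c:ℝ) - -((k:ℝ) + j + s + 1), -(-(c:ℝ)), 1] := by
        funext i; fin_cases i <;> simp <;> push_cast <;> ring
      simp only [hv]
      exact (inf_CB _ _).symm
    · refine Or.inl (inf_CC _ _ ?_)
      have h2' : (c:ℝ) ≤ (k:ℝ) + j := by exact_mod_cast h2
      have hs0 : (0:ℝ) ≤ (s:ℕ) := Nat.cast_nonneg s
      intro he
      have he' : (k:ℝ) + j + s + 1 = (c:ℝ) := by linarith [neg_injective he]
      linarith
  · rintro (rfl | ⟨m, ⟨hm1, hm2⟩, rfl⟩)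
    · exact ⟨lineL 0 0 1, mem_arrA2.mpr (Or.inl rfl), inf_Cinf _⟩
    · by_cases hmk : m ≤ (k:ℤ) + j
      · refine ⟨lineL 1 0 (-(m:ℝ)),
          mem_arrA2.mpr (Or.inr ⟨m, hm1, hmk, Or.inl rfl⟩), ?_⟩
        rw [inf_CA]
        have hv : ![-(-(m:ℝ)), -(m:ℝ) - -((k:ℝ) + j + s + 1), 1]
            = ![(m:ℝ), ((k:ℝ) + j + s + 1) - m, 1] := by
          funext i; fin_cases i <;> simp <;> push_cast <;> ring
        rw [hv]
      · refine ⟨lineL 0 1 (-((((k:ℤ) + j + s + 1) - m : ℤ) : ℝ)),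
          mem_arrA2.mpr (Or.inr ⟨((k:ℤ) + j + s + 1) - m, by omega, by omega,
            Or.inr (Or.inl rfl)⟩), ?_⟩
        rw [inf_CB]
        have hv : ![-((((k:ℤ) + j + s + 1) - m : ℤ) : ℝ) - -((k:ℝ) + j + s + 1),
            -(-((((k:ℤ) + j + s + 1) - m : ℤ) : ℝ)), 1]
            = ![(m:ℝ), ((k:ℝ) + j + s + 1) - m, 1] := by
          funext i; fin_cases i <;> simp <;> push_cast <;> ring
        rw [hv]

/-- For `0 ≤ 2s ≤ k-1` and `L` one of the lines `x = -(j+s+1)z`, `y = -(j+s+1)z`,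
`x + y = (k+j+s+1)z`, which are not in the arrangement, the set of intersection points
of `L` with the lines of the arrangement has exactly `k+3j+3+s` elements
(so `t_{A ∪ {L}, L} = 2k+3j+1-s`). -/
theorem jumping_line_outside_arrangement (k j s : ℕ) (hk : 1 ≤ k) (hs : 2 * s ≤ k - 1)
    (L : Submodule ℝ (Fin 3 → ℝ))
    (hL : L = lineL 1 0 ((j : ℝ) + s + 1) ∨ L = lineL 0 1 ((j : ℝ) + s + 1) ∨
      L = lineL 1 1 (-((k : ℝ) + j + s + 1))) :
    (arrA2 k j).ncard = 3 * (k + 2 * j + 1) + 1 ∧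
    L ∉ arrA2 k j ∧
    ((fun K => L ⊓ K) '' arrA2 k j).ncard = k + 3 * j + 3 + s := by
  have hs' : s < k := by omega
  have hs0 : (0:ℝ) ≤ (s:ℕ) := Nat.cast_nonneg s
  refine ⟨arrA2_card k j, ?_, ?_⟩
  · -- L ∉ arrA2 k j
    intro h
    rcases mem_arrA2.mp h with heq | ⟨c, h1, h2, heq | heq | heq⟩ <;>
      rcases hL with rfl | rfl | rfl
    · exact lineInf_ne_A _ heq.symm
    · exact lineInf_ne_B _ heq.symm
    · exact lineInf_ne_C _ heq.symm
    · have hc := lineA_inj heq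
      have h1' : -(j:ℝ) ≤ (c:ℝ) := by exact_mod_cast h1
      linarith
    · exact lineA_ne_B _ _ heq.symm
    · exact lineA_ne_C _ _ heq.symm
    · exact lineA_ne_B _ _ heq
    · have hc := lineB_inj heq
      have h1' : -(j:ℝ) ≤ (c:ℝ) := by exact_mod_cast h1
      linarith
    · exact lineB_ne_C _ _ heq.symm
    · exact lineA_ne_C _ _ heq
    · exact lineB_ne_C _ _ heq
    · have hc := lineC_inj heq
      have h2' : (c:ℝ) ≤ (k:ℝ) + j := by exact_mod_cast h2
      have : (k:ℝ) + j + s + 1 = (c:ℝ) := by linarith [neg_injective hc]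
      linarith
  · rcases hL with rfl | rfl | rfl
    · have hg : Function.Injective
          (fun m : ℤ => Submodule.span ℝ {![-((j:ℝ) + s + 1), (m:ℝ), 1]}) := by
        intro x y h
        have := (span1_inj h).2
        exact_mod_cast this
      have hP : ∀ m : ℤ, Submodule.span ℝ {![0, 1, 0]}
          ≠ Submodule.span ℝ {![-((j:ℝ) + s + 1), (m:ℝ), 1]} := fun m =>
        span0_ne 0 1 _ _
      rw [imageA k j s hs', count_main _ _ hg hP]
      omega
    · have hg : Function.Injective
          (fun m : ℤ => Submodule.span ℝ {![(m:ℝ), -((j:ℝ) + s + 1), 1]}) := by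
        intro x y h
        have := (span1_inj h).1
        exact_mod_cast this
      have hP : ∀ m : ℤ, Submodule.span ℝ {![1, 0, 0]}
          ≠ Submodule.span ℝ {![(m:ℝ), -((j:ℝ) + s + 1), 1]} := fun m =>
        span0_ne 1 0 _ _
      rw [imageB k j s hs', count_main _ _ hg hP]
      omega
    · have hg : Function.Injective
          (fun m : ℤ => Submodule.span ℝ {![(m:ℝ), ((k:ℝ) + j + s + 1) - m, 1]}) := by
        intro x y h
        have := (span1_inj h).1
        exact_mod_cast this
      have hP : ∀ m : ℤ, Submodule.span ℝ {![1, -1, 0]}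
          ≠ Submodule.span ℝ {![(m:ℝ), ((k:ℝ) + j + s + 1) - m, 1]} := fun m =>
        span0_ne 1 (-1) _ _
      rw [imageC k j s hs', count_main _ _ hg hP]
      omega
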